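/- Let d_1,...,d_k ≥ 1 be positive integers and write C̃^{d_1,...,d_k}(N) = Σ_j C̃^{d_1,...,d_k}_j N^j as a polynomial in N. Then C̃^{d_1,...,d_k}_j = 0 whenever j is not congruent to k - 1 + Σ_{i=1}^k d_i modulo 2. -/

import Mathlib

open Polynomial Finset

lemma polyext {p q : ℚ[X]} (h : ∀ n : ℕ, p.eval (n:ℚ) = q.eval (n:ℚ)) : p = q := by
  have h0 : p - q = 0 := by
    apply Polynomial.eq_zero_of_infinite_isRoot
    apply (Set.infinite_range_of_injective (Nat.cast_injective (R := ℚ))).mono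
    rintro x ⟨n, rfl⟩
    simp [Polynomial.IsRoot, h n]
  exact sub_eq_zero.1 h0

lemma negpow_eq {j e : ℕ} (h : j % 2 = e % 2) : ((-1:ℚ))^j = (-1)^e := by
  conv_lhs => rw [← Nat.div_add_mod j 2]
  conv_rhs => rw [← Nat.div_add_mod e 2]
  simp [pow_add, pow_mul, h]

lemma good_of_reflect (e : ℕ) (p : ℚ[X])
    (h : ∀ x : ℚ, p.eval (-x) = (-1)^e * p.eval x) :
    ∀ j, j % 2 ≠ e % 2 → p.coeff j = 0 := by
  set q : ℚ[X] := ∑ i ∈ Finset.range (p.natDegree + 1), C (p.coeff i * (-1)^i) * X^i with hq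
  have hqe : ∀ x : ℚ, q.eval x = p.eval (-x) := by
    intro x
    rw [Polynomial.eval_eq_sum_range (x := -x)]
    simp only [hq, eval_finset_sum, eval_mul, eval_C, eval_pow, eval_X]
    exact Finset.sum_congr rfl fun i _ => by rw [neg_pow]; ring
  have hpq : q = C ((-1)^e) * p := by
    apply polyext
    intro n
    rw [hqe, h]
    simp
  have hcq : ∀ i, q.coeff i = p.coeff i * (-1)^i := by
    intro i
    rcases le_or_gt i p.natDegree with hi | hi
    · rw [hq]
      rw [finset_sum_coeff]
      rw [Finset.sum_eq_single i]
      · rw [coeff_C_mul, coeff_X_pow]; simp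
      · intro b _ hbne
        rw [coeff_C_mul, coeff_X_pow]
        simp [Ne.symm hbne]
      · intro hnot
        exact absurd (Finset.mem_range.2 (Nat.lt_succ_of_le hi)) hnot
    · have h1 : p.coeff i = 0 := coeff_eq_zero_of_natDegree_lt hi
      have h2 : q.coeff i = 0 := by
        rw [hq, finset_sum_coeff]
        apply Finset.sum_eq_zero
        intro b hb
        have hne : i ≠ b := by
          rw [Finset.mem_range] at hb; omega
        rw [coeff_C_mul, coeff_X_pow]
        simp [hne]
      rw [h1, h2]; ring
  intro j hj
  have := congrArg (fun r => Polynomial.coeff r j) hpq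
  simp only [coeff_C_mul, hcq] at this
  have hsign : ((-1:ℚ))^j = -(-1)^e := by
    have h2 : j % 2 = (e+1) % 2 := by omega
    rw [negpow_eq h2, pow_succ]; ring
  rw [hsign] at this
  have h4 : p.coeff j * (2 * (-1)^e) = 0 := by linarith [this]
  rcases mul_eq_zero.1 h4 with h | h
  · exact h
  · exfalso
    have : ((-1:ℚ))^e ≠ 0 := by
      rcases neg_one_pow_eq_one_iff_even (R := ℚ) (h := by norm_num) |>.2 with _
      · rcases Nat.even_or_odd e with he | he
        · simp [he.neg_one_pow]
        · simp [he.neg_one_pow]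
    · simp [this] at h

lemma const_of_periodic {p : ℚ[X]} (h : ∀ x : ℚ, p.eval (x+1) = p.eval x) :
    ∀ x : ℚ, p.eval x = p.eval 0 := by
  have hp : p = C (p.eval 0) := by
    apply polyext
    intro n
    induction n with
    | zero => simp
    | succ n ih => push_cast; rw [h]; push_cast at ih; rw [ih]; simp
  intro x
  conv_lhs => rw [hp]
  simp

noncomputable def Tpoly (c : ℕ) : ℚ[X] :=
  ∑ i ∈ Finset.range (c+1), C ((_root_.bernoulli i) * ((c+1).choose i : ℚ) / (c+1)) * X^(c+1-i)

lemma Tpoly_eval (c n : ℕ) : (Tpoly c).eval (n:ℚ) = ∑ m ∈ Finset.range n, (m:ℚ)^c := by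
  rw [_root_.sum_range_pow]
  simp only [Tpoly, eval_finset_sum, eval_mul, eval_C, eval_pow, eval_X]
  exact Finset.sum_congr rfl fun i _ => by ring

lemma Tpoly_diff (c : ℕ) : ∀ x : ℚ, (Tpoly c).eval (x+1) - (Tpoly c).eval x = x^c := by
  have key : (Tpoly c).comp (X + 1) - Tpoly c - X^c = 0 := by
    apply polyext (q := 0)
    intro n
    simp only [eval_sub, eval_comp, eval_add, eval_X, eval_one, eval_pow, eval_zero]
    have h1 : ((n:ℚ) + 1) = ((n+1 : ℕ) : ℚ) := by push_cast; ring
    rw [h1, Tpoly_eval, Tpoly_eval, Finset.sum_range_succ]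
    ring
  intro x
  have h := congrArg (Polynomial.eval x) key
  simp only [eval_sub, eval_comp, eval_add, eval_X, eval_one, eval_pow, eval_zero] at h
  linarith

lemma Tpoly_refl (c : ℕ) (hc : 1 ≤ c) :
    ∀ x : ℚ, (Tpoly c).eval (1 - x) = (-1)^(c+1) * (Tpoly c).eval x := by
  set W : ℚ[X] := (Tpoly c).comp (C 1 - X) - C ((-1:ℚ)^(c+1)) * Tpoly c with hW
  have hWe : ∀ x : ℚ, W.eval x = (Tpoly c).eval (1 - x) - (-1)^(c+1) * (Tpoly c).eval x := by
    intro x; simp [hW, eval_comp]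
  have hper : ∀ x : ℚ, W.eval (x+1) = W.eval x := by
    intro x
    rw [hWe, hWe]
    have h1 : (1 : ℚ) - (x+1) = -x := by ring
    have h2 := Tpoly_diff c (-x)
    have h3 := Tpoly_diff c x
    have h4 : (-x) + 1 = 1 - x := by ring
    rw [h4] at h2
    rw [h1]
    linear_combination (-1 : ℚ) * h2 - (-1:ℚ)^(c+1) * h3
  have hzero : W.eval 0 = 0 := by
    rw [hWe]
    have e1 : (1:ℚ) - 0 = ((1:ℕ):ℚ) := by norm_num
    have e0 : (0:ℚ) = ((0:ℕ):ℚ) := by norm_num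
    rw [e1, e0, Tpoly_eval, Tpoly_eval]
    simp [Finset.sum_range_one, zero_pow (by omega : c ≠ 0)]
  intro x
  have := const_of_periodic hper x
  rw [hzero, hWe] at this
  linarith

lemma Pab (a b : ℕ) (ha : 1 ≤ a) (hb : 1 ≤ b) :
    ∃ P : ℚ[X],
      (∀ N : ℕ, P.eval (N:ℚ) = ∑ m ∈ Finset.range (N+1), (m:ℚ)^a * ((N:ℚ) - (m:ℚ))^b) ∧
      (∀ x : ℚ, P.eval (-x) = (-1)^(a+b+1) * P.eval x) := by
  have hc : ∀ j : ℕ, 1 ≤ a + (b - j) := fun j => le_trans ha (Nat.le_add_right a _)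
  have hzero : ∑ j ∈ Finset.range (b+1), ((-1:ℚ)^(j+b) * (b.choose j:ℚ)) = 0 := by
    calc ∑ j ∈ Finset.range (b+1), ((-1:ℚ)^(j+b) * (b.choose j:ℚ))
        = ∑ j ∈ Finset.range (b+1), ((-1:ℚ)^(j+b) * (1:ℚ)^j * (1:ℚ)^(b-j) * (b.choose j:ℚ)) := by
          apply Finset.sum_congr rfl; intro j _; simp
      _ = ((1:ℚ) - 1)^b := (sub_pow (1:ℚ) 1 b).symm
      _ = 0 := by rw [sub_self, zero_pow (by omega : b ≠ 0)]
  refine ⟨∑ j ∈ Finset.range (b+1),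
      C ((-1:ℚ)^(j+b) * (b.choose j : ℚ)) * X^j * ((Tpoly (a+(b-j))).comp (X + 1)), ?_, ?_⟩
  · intro N
    simp only [eval_finset_sum, eval_mul, eval_C, eval_pow, eval_X, eval_comp, eval_add, eval_one]
    have hT : ∀ j : ℕ, (Tpoly (a+(b-j))).eval ((N:ℚ)+1)
        = ∑ m ∈ Finset.range (N+1), (m:ℚ)^(a+(b-j)) := by
      intro j
      have h1 : ((N:ℚ)+1) = ((N+1:ℕ):ℚ) := by push_cast; ring
      rw [h1, Tpoly_eval]
    calc ∑ j ∈ Finset.range (b+1),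
            ((-1:ℚ)^(j+b) * (b.choose j:ℚ)) * (N:ℚ)^j * (Tpoly (a+(b-j))).eval ((N:ℚ)+1)
        = ∑ j ∈ Finset.range (b+1), ∑ m ∈ Finset.range (N+1),
            ((-1:ℚ)^(j+b) * (b.choose j:ℚ)) * (N:ℚ)^j * (m:ℚ)^(a+(b-j)) := by
          apply Finset.sum_congr rfl; intro j _
          rw [hT j, Finset.mul_sum]
      _ = ∑ m ∈ Finset.range (N+1), ∑ j ∈ Finset.range (b+1),
            ((-1:ℚ)^(j+b) * (b.choose j:ℚ)) * (N:ℚ)^j * (m:ℚ)^(a+(b-j)) := Finset.sum_comm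
      _ = ∑ m ∈ Finset.range (N+1), (m:ℚ)^a * ((N:ℚ) - (m:ℚ))^b := by
          apply Finset.sum_congr rfl; intro m _
          rw [sub_pow, Finset.mul_sum]
          apply Finset.sum_congr rfl; intro j _
          rw [pow_add]; ring
  · intro x
    simp only [eval_finset_sum, eval_mul, eval_C, eval_pow, eval_X, eval_comp, eval_add, eval_one]
    have key1 : ∑ j ∈ Finset.range (b+1),
            ((-1:ℚ)^(j+b) * (b.choose j:ℚ)) * (-x)^j * (Tpoly (a+(b-j))).eval (-x+1)
        = (-1:ℚ)^(a+b+1) * ∑ j ∈ Finset.range (b+1),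
            ((-1:ℚ)^(j+b) * (b.choose j:ℚ)) * x^j * (Tpoly (a+(b-j))).eval x := by
      rw [Finset.mul_sum]
      apply Finset.sum_congr rfl; intro j hj
      have hjb : j ≤ b := by rw [Finset.mem_range] at hj; omega
      have hr := Tpoly_refl (a+(b-j)) (hc j) x
      have hx1 : (-x+1 : ℚ) = 1 - x := by ring
      rw [hx1, hr, neg_pow]
      have hsg : ((-1:ℚ))^j * (-1)^(a+(b-j)+1) = (-1)^(a+b+1) := by
        rw [← pow_add]; congr 1; omega
      linear_combination ((-1:ℚ)^(j+b) * (b.choose j:ℚ)) * x^j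
        * (Tpoly (a+(b-j))).eval x * hsg
    have key2 : ∑ j ∈ Finset.range (b+1),
            ((-1:ℚ)^(j+b) * (b.choose j:ℚ)) * x^j * (Tpoly (a+(b-j))).eval (x+1)
        = ∑ j ∈ Finset.range (b+1),
            ((-1:ℚ)^(j+b) * (b.choose j:ℚ)) * x^j * (Tpoly (a+(b-j))).eval x := by
      have expand : ∀ j ∈ Finset.range (b+1),
          ((-1:ℚ)^(j+b) * (b.choose j:ℚ)) * x^j * (Tpoly (a+(b-j))).eval (x+1)
          = ((-1:ℚ)^(j+b) * (b.choose j:ℚ)) * x^j * (Tpoly (a+(b-j))).eval x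
            + ((-1:ℚ)^(j+b) * (b.choose j:ℚ)) * x^(a+b) := by
        intro j hj
        have hjb : j ≤ b := by rw [Finset.mem_range] at hj; omega
        have hd := Tpoly_diff (a+(b-j)) x
        have hxp : x^j * x^(a+(b-j)) = x^(a+b) := by rw [← pow_add]; congr 1; omega
        linear_combination ((-1:ℚ)^(j+b) * (b.choose j:ℚ)) * x^j * hd
          + ((-1:ℚ)^(j+b) * (b.choose j:ℚ)) * hxp
      rw [Finset.sum_congr rfl expand, Finset.sum_add_distrib, ← Finset.sum_mul, hzero]
      ring
    rw [key1, ← key2]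

lemma tuple_sum_rec (k N : ℕ) (f : (Fin (k+1) → ℕ) → ℚ) :
    ∑ a ∈ Finset.Nat.antidiagonalTuple (k+1) N, f a
      = ∑ mn ∈ Finset.HasAntidiagonal.antidiagonal N, ∑ t ∈ Finset.Nat.antidiagonalTuple k mn.2,
          f (Fin.cons mn.1 t) := by
  rw [Finset.sum_sigma']
  apply Finset.sum_nbij'
    (i := fun (a : Fin (k+1) → ℕ) =>
      (⟨(a 0, ∑ i : Fin k, a i.succ), Fin.tail a⟩ : (_ : ℕ × ℕ) × (Fin k → ℕ)))
    (j := fun p => Fin.cons p.1.1 p.2)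
  · intro a ha
    rw [Finset.Nat.mem_antidiagonalTuple] at ha
    rw [Finset.mem_sigma]
    constructor
    · rw [Finset.HasAntidiagonal.mem_antidiagonal]
      rw [Fin.sum_univ_succ] at ha
      exact ha
    · rw [Finset.Nat.mem_antidiagonalTuple]
      rfl
  · rintro ⟨⟨m, n⟩, t⟩ hp
    rw [Finset.mem_sigma, Finset.HasAntidiagonal.mem_antidiagonal, Finset.Nat.mem_antidiagonalTuple] at hp
    rw [Finset.Nat.mem_antidiagonalTuple, Fin.sum_univ_succ]
    simp only [Fin.cons_zero, Fin.cons_succ]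
    rw [hp.2]
    exact hp.1
  · intro a _
    exact Fin.cons_self_tail a
  · rintro ⟨⟨m, n⟩, t⟩ hp
    rw [Finset.mem_sigma, Finset.HasAntidiagonal.mem_antidiagonal, Finset.Nat.mem_antidiagonalTuple] at hp
    simp only [Fin.cons_zero, Fin.tail_cons, Fin.cons_succ]
    have : ∑ i : Fin k, t i = n := hp.2
    rw [this]
  · intro a _
    simp only [Fin.cons_self_tail]


set_option maxHeartbeats 1000000 in
lemma main_ind (k : ℕ) : ∀ d : Fin (k+1) → ℕ, (∀ i, 1 ≤ d i) →
    ∃ p : ℚ[X],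
      (∀ N : ℕ, p.eval (N:ℚ)
        = ∑ a ∈ Finset.Nat.antidiagonalTuple (k+1) N, ∏ i, ((a i : ℕ):ℚ)^(d i)) ∧
      (∀ x : ℚ, p.eval (-x) = (-1)^(k + ∑ i, d i) * p.eval x) := by
  induction k with
  | zero =>
    intro d hd
    refine ⟨X^(d 0), ?_, ?_⟩
    · intro N
      rw [Finset.Nat.antidiagonalTuple_one, Finset.sum_singleton]
      simp [Fin.prod_univ_one]
    · intro x
      simp only [eval_pow, eval_X]
      rw [neg_pow]
      simp [Fin.sum_univ_one]
  | succ k ih =>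
    intro d hd
    obtain ⟨q, hqv, hqr⟩ := ih (fun i => d i.succ) (fun i => hd i.succ)
    set e := k + ∑ i : Fin (k+1), d i.succ with he
    have hgood := good_of_reflect e q hqr
    have hq0 : q.coeff 0 = 0 := by
      rw [Polynomial.coeff_zero_eq_eval_zero]
      have h0 : ((0:ℕ):ℚ) = 0 := by norm_num
      rw [← h0, hqv 0]
      rw [Finset.Nat.antidiagonalTuple_zero_right, Finset.sum_singleton]
      apply Finset.prod_eq_zero (Finset.mem_univ (0 : Fin (k+1)))
      have : d 1 ≠ 0 := by have := hd 1; omega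
      simp [zero_pow this]
    have hb1 : ∀ b ∈ q.support, 1 ≤ b := by
      intro b hb
      rcases Nat.eq_zero_or_pos b with rfl | h
      · exact absurd hq0 (Polynomial.mem_support_iff.1 hb)
      · exact h
    have hbpar : ∀ b ∈ q.support, b % 2 = e % 2 := by
      intro b hb
      by_contra hne
      exact (Polynomial.mem_support_iff.1 hb) (hgood b hne)
    choose! F hF1 hF2 using fun b (hb : b ∈ q.support) => Pab (d 0) b (hd 0) (hb1 b hb)
    refine ⟨∑ b ∈ q.support, C (q.coeff b) * F b, ?_, ?_⟩
    · intro N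
      rw [tuple_sum_rec, Finset.Nat.sum_antidiagonal_eq_sum_range_succ_mk]
      simp only [eval_finset_sum, eval_mul, eval_C]
      calc ∑ b ∈ q.support, q.coeff b * (F b).eval (N:ℚ)
          = ∑ b ∈ q.support, ∑ m ∈ Finset.range (N+1),
              q.coeff b * ((m:ℚ)^(d 0) * ((N:ℚ)-(m:ℚ))^b) := by
            apply Finset.sum_congr rfl; intro b hb
            rw [hF1 b hb, Finset.mul_sum]
        _ = ∑ m ∈ Finset.range (N+1), ∑ b ∈ q.support,
              q.coeff b * ((m:ℚ)^(d 0) * ((N:ℚ)-(m:ℚ))^b) := Finset.sum_comm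
        _ = ∑ m ∈ Finset.range (N+1), (m:ℚ)^(d 0) * q.eval ((N:ℚ) - (m:ℚ)) := by
            apply Finset.sum_congr rfl; intro m _
            rw [Polynomial.eval_eq_sum, Polynomial.sum_def, Finset.mul_sum]
            apply Finset.sum_congr rfl; intro b _
            ring
        _ = ∑ m ∈ Finset.range (N+1), ∑ t ∈ Finset.Nat.antidiagonalTuple (k+1) (N - m),
              ∏ i : Fin (k+1+1), (((Fin.cons m t : Fin (k+1+1) → ℕ) i : ℕ):ℚ)^(d i) := by
            apply Finset.sum_congr rfl; intro m hm
            have hmN : m ≤ N := by rw [Finset.mem_range] at hm; omega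
            have hcast : ((N:ℚ) - (m:ℚ)) = ((N - m : ℕ):ℚ) := by
              rw [Nat.cast_sub hmN]
            rw [hcast, hqv (N - m), Finset.mul_sum]
            apply Finset.sum_congr rfl; intro t _
            symm
            rw [Fin.prod_univ_succ, Fin.cons_zero]
            congr 1
    · intro x
      simp only [eval_finset_sum, eval_mul, eval_C]
      rw [Finset.mul_sum]
      apply Finset.sum_congr rfl
      intro b hb
      rw [hF2 b hb x]
      have h2 : ∑ i : Fin (k+1+1), d i = d 0 + ∑ i : Fin (k+1), d i.succ := by
        rw [Fin.sum_univ_succ]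
      have hsg : ((-1:ℚ))^(d 0 + b + 1) = (-1)^(k + 1 + ∑ i : Fin (k+1+1), d i) := by
        apply negpow_eq
        rw [h2]
        have h1 := hbpar b hb
        rw [he] at h1
        omega
      rw [hsg]
      ring



/-- For `d₁,...,d_k ≥ 1`, writing `C̃^{d₁,...,d_k}(N) = ∑_j C̃_j N^j` as a
polynomial in `N`, the coefficient `C̃_j` vanishes whenever
`j ≢ k - 1 + ∑ dᵢ (mod 2)`. -/
theorem tildeC_coeff_parity (k : ℕ) (hk : 1 ≤ k) (d : Fin k → ℕ) (hd : ∀ i, 1 ≤ d i)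
    (p : Polynomial ℚ)
    (hp : ∀ N : ℕ, p.eval (N : ℚ) =
        ∑ a ∈ Finset.Nat.antidiagonalTuple k N, ∏ i : Fin k, (a i : ℚ) ^ d i)
    (j : ℕ) (hj : j % 2 ≠ (k - 1 + ∑ i, d i) % 2) :
    p.coeff j = 0 := by
  obtain ⟨k', rfl⟩ : ∃ k', k = k' + 1 := ⟨k - 1, by omega⟩
  obtain ⟨p', hv, hr⟩ := main_ind k' d hd
  have hpp : p = p' := polyext (fun n => by rw [hp n, hv n])
  rw [hpp]
  apply good_of_reflect _ _ hr
  have heq : (k' + 1 - 1 + ∑ i, d i) = k' + ∑ i, d i := by omega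
  rw [heq] at hj
  exact hj
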